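/- Fix reals ν1 ≥ 0, ν2 ≥ 0 and (ϑ1,ϑ2,ϑ3,ϑ4) ∈ ℝ⁴ with ϑ1+ϑ2 = 1 and ϑ3+ϑ4 = −1, and let ξ be a bounded measurable function on 𝒳×{0,1} with E[ξ(X,W) | σ(X)] = 0 a.s. Define the Generalized Non-Inverse Probability Weighting residual Ψ = e(X)^{ν1}(1−e(X))^{ν2}[(ϑ1·W + ϑ2·e(X) + ϑ3·W·e(X) + ϑ4·e(X)²)·τ(X) − (W−e(X))·Y] + ξ(X,W). Then under unconfoundedness, SUTVA, population overlap and bounded outcomes, E[Ψ | σ(X)] = 0 a.s. and E[Ψ² | σ(X)] is a.s. finite, even without strict overlap. -/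

import Mathlib

open MeasureTheory ProbabilityTheory Filter Set Topology
open scoped NNReal

/-- The sub-σ-algebra σ(X) generated by a random element `X`. -/
abbrev sigmaAlg {Ω 𝒳 : Type*} [m𝒳 : MeasurableSpace 𝒳] (X : Ω → 𝒳) : MeasurableSpace Ω :=
  MeasurableSpace.comap X m𝒳

section Aux

variable {Ω : Type*} {m' : MeasurableSpace Ω} [mΩ : MeasurableSpace Ω]

lemma integrable_of_bdd {P : Measure Ω} [IsFiniteMeasure P] {f : Ω → ℝ}
    (hf : AEStronglyMeasurable f P) {C : ℝ} (h : ∀ᵐ ω ∂P, |f ω| ≤ C) : Integrable f P :=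
  Integrable.mono' (integrable_const C) hf (by simpa [Real.norm_eq_abs] using h)

lemma abs_mul_le' {a b c d : ℝ} (ha : |a| ≤ c) (hb : |b| ≤ d) : |a * b| ≤ c * d := by
  rw [abs_mul]
  exact mul_le_mul ha hb (abs_nonneg _) (le_trans (abs_nonneg _) ha)

lemma condexp_indicator_mul_of_forall_sets
    (hm' : m' ≤ mΩ) (P : Measure Ω) [IsProbabilityMeasure P]
    {A : Set Ω} (hA : MeasurableSet A)
    {Z : Ω → ℝ} (hZ : Measurable Z) {C : ℝ} (hC : ∀ ω, |Z ω| ≤ C)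
    (H : ∀ t : Set ℝ, MeasurableSet t →
      (P[(A ∩ Z ⁻¹' t).indicator (fun _ => (1:ℝ)) | m']) =ᵐ[P]
        fun ω => (P[A.indicator (fun _ => (1:ℝ)) | m']) ω *
          (P[(Z ⁻¹' t).indicator (fun _ => (1:ℝ)) | m']) ω) :
    P[fun ω => A.indicator (fun _ => (1:ℝ)) ω * Z ω | m'] =ᵐ[P]
      fun ω => (P[A.indicator (fun _ => (1:ℝ)) | m']) ω * (P[Z | m']) ω := by
  set ζ := P[A.indicator (fun _ => (1:ℝ)) | m'] with hζdef
  have hζsm : StronglyMeasurable[m'] ζ := stronglyMeasurable_condExp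
  have hζint : Integrable ζ P := integrable_condExp
  have hζbdd : ∀ᵐ ω ∂P, ‖ζ ω‖ ≤ 1 := by
    have h1 : ∀ᵐ ω ∂P, |ζ ω| ≤ ((1 : ℝ≥0) : ℝ) :=
      ae_bdd_condExp_of_ae_bdd (R := 1) (ae_of_all _ fun ω => by
        by_cases h : ω ∈ A <;> simp [Set.indicator_apply, h])
    simpa [Real.norm_eq_abs] using h1
  have hζaesm : AEStronglyMeasurable ζ P := (hζsm.mono hm').aestronglyMeasurable
  have hZint : Integrable Z P := integrable_of_bdd hZ.aestronglyMeasurable (ae_of_all _ hC)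
  -- pull-out step
  have pull : ∀ (V : Ω → ℝ), Integrable V P → ∀ s : Set Ω, MeasurableSet[m'] s →
      ∫ ω in s, ζ ω * (P[V | m']) ω ∂P = ∫ ω in s, ζ ω * V ω ∂P := by
    intro V hV s hs
    have hprod : Integrable (fun ω => ζ ω * V ω) P := hV.bdd_mul hζaesm hζbdd
    have h1 : P[fun ω => ζ ω * V ω | m'] =ᵐ[P] fun ω => ζ ω * (P[V | m']) ω :=
      condExp_stronglyMeasurable_mul_of_bound hm' hζsm hV 1 hζbdd
    calc ∫ ω in s, ζ ω * (P[V | m']) ω ∂P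
        = ∫ ω in s, (P[fun ω => ζ ω * V ω | m']) ω ∂P := by
          refine setIntegral_congr_ae (hm' s hs) ?_
          filter_upwards [h1] with ω hω _ using hω.symm
      _ = ∫ ω in s, ζ ω * V ω ∂P := setIntegral_condExp hm' hprod hs
  -- step 1 : indicators
  have step1 : ∀ t : Set ℝ, MeasurableSet t → ∀ s : Set Ω, MeasurableSet[m'] s →
      ∫ ω in s, ζ ω * (Z ⁻¹' t).indicator (fun _ => (1:ℝ)) ω ∂P
        = ∫ ω in s, A.indicator (fun _ => (1:ℝ)) ω * (Z ⁻¹' t).indicator (fun _ => (1:ℝ)) ω ∂P := by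
    intro t ht s hs
    have hBmeas : MeasurableSet (Z ⁻¹' t) := hZ ht
    have hBint : Integrable ((Z ⁻¹' t).indicator (fun _ => (1:ℝ))) P :=
      integrable_of_bdd (C := 1) ((measurable_one.indicator hBmeas).aestronglyMeasurable)
        (ae_of_all _ fun ω => by by_cases h : ω ∈ Z ⁻¹' t <;> simp [Set.indicator_apply, h])
    have hABint : Integrable ((A ∩ Z ⁻¹' t).indicator (fun _ => (1:ℝ))) P :=
      integrable_of_bdd (C := 1) ((measurable_one.indicator (hA.inter hBmeas)).aestronglyMeasurable)
        (ae_of_all _ fun ω => by by_cases h : ω ∈ A ∩ Z ⁻¹' t <;> simp [Set.indicator_apply, h])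
    rw [← pull _ hBint s hs]
    calc ∫ ω in s, ζ ω * (P[(Z ⁻¹' t).indicator (fun _ => (1:ℝ)) | m']) ω ∂P
        = ∫ ω in s, (P[(A ∩ Z ⁻¹' t).indicator (fun _ => (1:ℝ)) | m']) ω ∂P := by
          refine setIntegral_congr_ae (hm' s hs) ?_
          filter_upwards [H t ht] with ω hω _ using hω.symm
      _ = ∫ ω in s, (A ∩ Z ⁻¹' t).indicator (fun _ => (1:ℝ)) ω ∂P :=
          setIntegral_condExp hm' hABint hs
      _ = ∫ ω in s, A.indicator (fun _ => (1:ℝ)) ω * (Z ⁻¹' t).indicator (fun _ => (1:ℝ)) ω ∂P := by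
          refine setIntegral_congr_ae (hm' s hs) (ae_of_all _ fun ω _ => ?_)
          by_cases h1 : ω ∈ A <;> by_cases h2 : ω ∈ Z ⁻¹' t <;>
            simp [Set.indicator_apply, h1, h2]
  -- step 2 : simple functions
  have step2 : ∀ (φ : SimpleFunc ℝ ℝ), ∀ s : Set Ω, MeasurableSet[m'] s →
      ∫ ω in s, ζ ω * φ (Z ω) ∂P = ∫ ω in s, A.indicator (fun _ => (1:ℝ)) ω * φ (Z ω) ∂P := by
    have I1 : ∀ (χ : SimpleFunc ℝ ℝ) (s : Set Ω),
        Integrable (fun ω => ζ ω * χ (Z ω)) (P.restrict s) := by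
      intro χ s
      obtain ⟨c, hc⟩ := χ.exists_forall_norm_le
      have hZχ : Integrable (fun ω => χ (Z ω)) (P.restrict s) :=
        integrable_of_bdd ((χ.measurable.comp hZ).aestronglyMeasurable)
          (ae_of_all _ fun ω => by simpa [Real.norm_eq_abs] using hc (Z ω))
      exact hZχ.bdd_mul hζaesm.restrict (ae_restrict_of_ae hζbdd)
    have I2 : ∀ (χ : SimpleFunc ℝ ℝ) (s : Set Ω),
        Integrable (fun ω => A.indicator (fun _ => (1:ℝ)) ω * χ (Z ω)) (P.restrict s) := by
      intro χ s
      obtain ⟨c, hc⟩ := χ.exists_forall_norm_le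
      have hZχ : Integrable (fun ω => χ (Z ω)) (P.restrict s) :=
        integrable_of_bdd ((χ.measurable.comp hZ).aestronglyMeasurable)
          (ae_of_all _ fun ω => by simpa [Real.norm_eq_abs] using hc (Z ω))
      refine hZχ.bdd_mul (c := 1) ((measurable_one.indicator hA).aestronglyMeasurable.restrict)
        (ae_of_all _ fun ω => ?_)
      by_cases h : ω ∈ A <;> simp [Set.indicator_apply, h]
    intro φ
    induction φ using SimpleFunc.induction with
    | @const c t ht =>
      intro s hs
      have e1 : ∀ ω, ζ ω *
          (SimpleFunc.piecewise t ht (SimpleFunc.const ℝ c) (SimpleFunc.const ℝ 0)) (Z ω)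
          = c * (ζ ω * (Z ⁻¹' t).indicator (fun _ => (1:ℝ)) ω) := by
        intro ω
        by_cases h : Z ω ∈ t <;>
          simp [SimpleFunc.piecewise_apply, Set.indicator_apply, h] <;> ring
      have e2 : ∀ ω, A.indicator (fun _ => (1:ℝ)) ω *
          (SimpleFunc.piecewise t ht (SimpleFunc.const ℝ c) (SimpleFunc.const ℝ 0)) (Z ω)
          = c * (A.indicator (fun _ => (1:ℝ)) ω * (Z ⁻¹' t).indicator (fun _ => (1:ℝ)) ω) := by
        intro ω
        by_cases h : Z ω ∈ t <;>
          simp [SimpleFunc.piecewise_apply, Set.indicator_apply, h] <;> ring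
      simp_rw [e1, e2, integral_const_mul]
      rw [step1 t ht s hs]
    | @add φ ψ hdis hφ' hψ' =>
      intro s hs
      have e1 : ∀ ω, ζ ω * (φ + ψ) (Z ω) = ζ ω * φ (Z ω) + ζ ω * ψ (Z ω) := by
        intro ω; simp [mul_add]
      have e2 : ∀ ω, A.indicator (fun _ => (1:ℝ)) ω * (φ + ψ) (Z ω)
          = A.indicator (fun _ => (1:ℝ)) ω * φ (Z ω)
            + A.indicator (fun _ => (1:ℝ)) ω * ψ (Z ω) := by
        intro ω; simp [mul_add]
      simp_rw [e1, e2]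
      rw [integral_add (I1 φ s) (I1 ψ s), integral_add (I2 φ s) (I2 ψ s),
        hφ' s hs, hψ' s hs]
  -- step 3 : limit
  have step3 : ∀ s : Set Ω, MeasurableSet[m'] s →
      ∫ ω in s, ζ ω * Z ω ∂P = ∫ ω in s, A.indicator (fun _ => (1:ℝ)) ω * Z ω ∂P := by
    intro s hs
    set φ : ℕ → SimpleFunc ℝ ℝ :=
      fun n => SimpleFunc.approxOn (id : ℝ → ℝ) measurable_id univ 0 (mem_univ 0) n with hφdef
    have htend : ∀ ω, Tendsto (fun n => (φ n) (Z ω)) atTop (𝓝 (Z ω)) := by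
      intro ω
      simpa using SimpleFunc.tendsto_approxOn (f := (id : ℝ → ℝ)) measurable_id (mem_univ 0)
        (x := Z ω) (by simp)
    have hbnd : ∀ n ω, ‖(φ n) (Z ω)‖ ≤ C + C := by
      intro n ω
      refine (SimpleFunc.norm_approxOn_zero_le measurable_id (mem_univ 0) (Z ω) n).trans ?_
      have := hC ω
      simp only [id_eq, Real.norm_eq_abs]
      linarith
    have L1 : Tendsto (fun n => ∫ ω in s, ζ ω * (φ n) (Z ω) ∂P) atTop
        (𝓝 (∫ ω in s, ζ ω * Z ω ∂P)) := by
      refine tendsto_integral_of_dominated_convergence (fun ω => ‖ζ ω‖ * (C + C))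
        (fun n => ((hζsm.mono hm').measurable.mul
          ((φ n).measurable.comp hZ)).aestronglyMeasurable.restrict)
        ((hζint.norm.mul_const (C + C)).integrableOn) ?_ ?_
      · intro n
        refine ae_of_all _ fun ω => ?_
        rw [norm_mul]
        exact mul_le_mul_of_nonneg_left (hbnd n ω) (norm_nonneg _)
      · exact ae_of_all _ fun ω => (htend ω).const_mul _
    have L2 : Tendsto (fun n => ∫ ω in s, A.indicator (fun _ => (1:ℝ)) ω * (φ n) (Z ω) ∂P) atTop
        (𝓝 (∫ ω in s, A.indicator (fun _ => (1:ℝ)) ω * Z ω ∂P)) := by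
      refine tendsto_integral_of_dominated_convergence (fun _ => C + C)
        (fun n => ((measurable_one.indicator hA).mul
          ((φ n).measurable.comp hZ)).aestronglyMeasurable.restrict)
        (integrableOn_const) ?_ ?_
      · intro n
        refine ae_of_all _ fun ω => ?_
        rw [norm_mul]
        have h1 : ‖A.indicator (fun _ => (1:ℝ)) ω‖ ≤ 1 := by
          by_cases h : ω ∈ A <;> simp [Set.indicator_apply, h]
        have h2 := hbnd n ω
        simpa using mul_le_mul h1 h2 (norm_nonneg _) zero_le_one
      · exact ae_of_all _ fun ω => (htend ω).const_mul _
    have heq : (fun n => ∫ ω in s, ζ ω * (φ n) (Z ω) ∂P)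
        = fun n => ∫ ω in s, A.indicator (fun _ => (1:ℝ)) ω * (φ n) (Z ω) ∂P := by
      funext n; exact step2 (φ n) s hs
    rw [heq] at L1
    exact tendsto_nhds_unique L1 L2
  -- conclusion
  refine (ae_eq_condExp_of_forall_setIntegral_eq hm'
    (f := fun ω => A.indicator (fun _ => (1:ℝ)) ω * Z ω)
    (g := fun ω => ζ ω * (P[Z | m']) ω) ?_ ?_ ?_ ?_).symm
  · refine integrable_of_bdd (((measurable_one.indicator hA).mul hZ).aestronglyMeasurable)
      (C := C) (ae_of_all _ fun ω => ?_)
    have h1 : |A.indicator (fun _ => (1:ℝ)) ω| ≤ 1 := by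
      by_cases h : ω ∈ A <;> simp [Set.indicator_apply, h]
    have h2 := hC ω
    have h3 : (0:ℝ) ≤ C := le_trans (abs_nonneg _) h2
    rw [abs_mul]
    nlinarith [abs_nonneg (Z ω)]
  · intro s _ _
    exact (integrable_condExp.bdd_mul hζaesm hζbdd).integrableOn
  · intro s hs _
    rw [pull Z hZint s hs, step3 s hs]
  · exact (hζsm.mul stronglyMeasurable_condExp).aestronglyMeasurable

end Aux

theorem stmt_3
    {Ω 𝒳 : Type*} [MeasurableSpace Ω] [StandardBorelSpace Ω] [MeasurableSpace 𝒳]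
    (P : Measure Ω) [IsProbabilityMeasure P]
    (X : Ω → 𝒳) (hX : Measurable X)
    (W : Ω → ℝ) (hWm : Measurable W) (hWbin : ∀ ω, W ω = 0 ∨ W ω = 1)
    (Y0 Y1 : Ω → ℝ) (hY0m : Measurable Y0) (hY1m : Measurable Y1)
    (CY : ℝ) (hYbdd : ∀ ω, |Y0 ω| ≤ CY ∧ |Y1 ω| ≤ CY)
    (Y : Ω → ℝ) (hSUTVA : ∀ ω, Y ω = W ω * Y1 ω + (1 - W ω) * Y0 ω)
    (hUnconf : CondIndepFun (sigmaAlg X) hX.comap_le W (fun ω => (Y0 ω, Y1 ω)) P)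
    (e : 𝒳 → ℝ) (hem : Measurable e)
    (hprop : P[W|sigmaAlg X] =ᵐ[P] (fun ω => e (X ω)))
    (hoverlap : ∀ᵐ ω ∂P, 0 < e (X ω) ∧ e (X ω) < 1)
    (μ0 μ1 : 𝒳 → ℝ) (hμ0m : Measurable μ0) (hμ1m : Measurable μ1)
    (Cμ : ℝ) (hμbdd : ∀ x, |μ0 x| ≤ Cμ ∧ |μ1 x| ≤ Cμ)
    (hμ0c : P[Y0|sigmaAlg X] =ᵐ[P] (fun ω => μ0 (X ω)))
    (hμ1c : P[Y1|sigmaAlg X] =ᵐ[P] (fun ω => μ1 (X ω)))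
    (ν1 ν2 : ℝ) (hν1 : 0 ≤ ν1) (hν2 : 0 ≤ ν2)
    (θ1 θ2 θ3 θ4 : ℝ) (hθ12 : θ1 + θ2 = 1) (hθ34 : θ3 + θ4 = -1)
    (ξ : 𝒳 × ℝ → ℝ) (hξm : Measurable ξ) (Cξ : ℝ) (hξbdd : ∀ q, |ξ q| ≤ Cξ)
    (hξ0 : P[(fun ω => ξ (X ω, W ω))|sigmaAlg X] =ᵐ[P] 0) :
    P[(fun ω => e (X ω) ^ ν1 * (1 - e (X ω)) ^ ν2 * ((θ1 * W ω + θ2 * e (X ω) + θ3 * W ω * e (X ω) + θ4 * e (X ω) ^ 2) * (μ1 (X ω) - μ0 (X ω)) - (W ω - e (X ω)) * Y ω) + ξ (X ω, W ω))|sigmaAlg X] =ᵐ[P] 0 ∧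
    ∃ C : ℝ, ∀ᵐ ω ∂P, (P[(fun ω' => (e (X ω') ^ ν1 * (1 - e (X ω')) ^ ν2 * ((θ1 * W ω' + θ2 * e (X ω') + θ3 * W ω' * e (X ω') + θ4 * e (X ω') ^ 2) * (μ1 (X ω') - μ0 (X ω')) - (W ω' - e (X ω')) * Y ω') + ξ (X ω', W ω')) ^ 2)|sigmaAlg X]) ω ≤ C := by
  have hm' : sigmaAlg X ≤ ‹MeasurableSpace Ω› := hX.comap_le
  have hXm' : Measurable[sigmaAlg X] X := fun s hs => ⟨s, hs, rfl⟩
  have hYm : Measurable Y := by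
    have hYeq : Y = fun ω => W ω * Y1 ω + (1 - W ω) * Y0 ω := funext hSUTVA
    rw [hYeq]; exact (hWm.mul hY1m).add ((measurable_const.sub hWm).mul hY0m)
  have habsW : ∀ ω, |W ω| ≤ 1 := fun ω => by rcases hWbin ω with h | h <;> simp [h]
  have habsY : ∀ ω, |Y ω| ≤ |CY| := by
    intro ω
    rcases hWbin ω with h | h <;> rw [hSUTVA ω, h]
    · simpa using (hYbdd ω).1.trans (le_abs_self CY)
    · simpa using (hYbdd ω).2.trans (le_abs_self CY)
  -- truncated propensity score
  set eTr : 𝒳 → ℝ := fun x => max 0 (min (e x) 1) with heTrdef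
  have heTrm : Measurable eTr := measurable_const.max (hem.min measurable_const)
  have heTr0 : ∀ x, 0 ≤ eTr x := fun x => le_max_left _ _
  have heTr1 : ∀ x, eTr x ≤ 1 := fun x => max_le zero_le_one (min_le_right _ _)
  have haeq : ∀ᵐ ω ∂P, eTr (X ω) = e (X ω) := by
    filter_upwards [hoverlap] with ω h
    simp only [heTrdef]
    rw [min_eq_left h.2.le, max_eq_right h.1.le]
  set p : Ω → ℝ := fun ω => eTr (X ω) with hpdef
  have hpm' : Measurable[sigmaAlg X] p := heTrm.comp hXm'
  have hpm : Measurable p := heTrm.comp hX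
  have habsp : ∀ ω, |p ω| ≤ 1 := fun ω => abs_le.mpr ⟨by linarith [heTr0 (X ω)], heTr1 (X ω)⟩
  -- integrability of basic pieces
  have hWint : Integrable W P :=
    integrable_of_bdd hWm.aestronglyMeasurable (ae_of_all _ habsW)
  have hY1int : Integrable Y1 P :=
    integrable_of_bdd hY1m.aestronglyMeasurable (ae_of_all _ fun ω => (hYbdd ω).2)
  have hY0int : Integrable Y0 P :=
    integrable_of_bdd hY0m.aestronglyMeasurable (ae_of_all _ fun ω => (hYbdd ω).1)
  have habsf1 : ∀ ω, |W ω * Y1 ω| ≤ 1 * |CY| :=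
    fun ω => abs_mul_le' (habsW ω) ((hYbdd ω).2.trans (le_abs_self _))
  have habs1W : ∀ ω, |1 - W ω| ≤ 1 := fun ω => by rcases hWbin ω with h | h <;> simp [h]
  have habsf0 : ∀ ω, |(1 - W ω) * Y0 ω| ≤ 1 * |CY| :=
    fun ω => abs_mul_le' (habs1W ω) ((hYbdd ω).1.trans (le_abs_self _))
  have hf1int : Integrable (fun ω => W ω * Y1 ω) P :=
    integrable_of_bdd (hWm.mul hY1m).aestronglyMeasurable (ae_of_all _ habsf1)
  have hf0int : Integrable (fun ω => (1 - W ω) * Y0 ω) P :=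
    integrable_of_bdd ((measurable_const.sub hWm).mul hY0m).aestronglyMeasurable
      (ae_of_all _ habsf0)
  -- K1 : conditional expectation of W * Y1
  have hci1 : CondIndepFun (sigmaAlg X) hX.comap_le W Y1 P := by
    have h := hUnconf.comp measurable_id measurable_snd
    simpa [Function.comp_def] using h
  rw [condIndepFun_iff_condExp_inter_preimage_eq_mul hWm hY1m] at hci1
  have hK1' := condexp_indicator_mul_of_forall_sets hX.comap_le P
    (hWm (measurableSet_singleton 1)) hY1m (C := |CY|)
    (fun ω => (hYbdd ω).2.trans (le_abs_self CY))
    (fun t ht => hci1 {1} t (measurableSet_singleton 1) ht)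
  have hWind : (W ⁻¹' {1}).indicator (fun _ => (1:ℝ)) = W := by
    funext ω; rcases hWbin ω with h | h <;> simp [Set.indicator_apply, h]
  have hK1 : P[(fun ω => W ω * Y1 ω)|sigmaAlg X] =ᵐ[P] fun ω => p ω * μ1 (X ω) := by
    have h1 : (fun ω => (W ⁻¹' {1}).indicator (fun _ => (1:ℝ)) ω * Y1 ω)
        = fun ω => W ω * Y1 ω := by
      funext ω; rw [congrFun hWind ω]
    have h2 : P[(W ⁻¹' {1}).indicator (fun _ => (1:ℝ))|sigmaAlg X] = P[W|sigmaAlg X] := by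
      rw [hWind]
    rw [← h1]
    refine hK1'.trans ?_
    rw [h2]
    filter_upwards [hprop, hμ1c, haeq] with ω hp1 hm1 heTre
    rw [hp1, hm1, hpdef]
    simp only
    rw [heTre]
  -- K0 : conditional expectation of (1-W) * Y0
  have hci0 : CondIndepFun (sigmaAlg X) hX.comap_le W Y0 P := by
    have h := hUnconf.comp measurable_id measurable_fst
    simpa [Function.comp_def] using h
  rw [condIndepFun_iff_condExp_inter_preimage_eq_mul hWm hY0m] at hci0
  have hK0' := condexp_indicator_mul_of_forall_sets hX.comap_le P
    (hWm (measurableSet_singleton 0)) hY0m (C := |CY|)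
    (fun ω => (hYbdd ω).1.trans (le_abs_self CY))
    (fun t ht => hci0 {0} t (measurableSet_singleton 0) ht)
  have hW0ind : (W ⁻¹' {0}).indicator (fun _ => (1:ℝ)) = fun ω => 1 - W ω := by
    funext ω; rcases hWbin ω with h | h <;> simp [Set.indicator_apply, h]
  have hcsub : P[(fun ω => 1 - W ω)|sigmaAlg X] =ᵐ[P] fun ω => 1 - p ω := by
    have h := condExp_sub (m := sigmaAlg X) (μ := P) (integrable_const (1:ℝ)) hWint
    have h' : P[(fun ω => 1 - W ω)|sigmaAlg X]
        =ᵐ[P] P[(fun _ => (1:ℝ))|sigmaAlg X] - P[W|sigmaAlg X] := h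
    refine h'.trans ?_
    rw [condExp_const hm']
    filter_upwards [hprop, haeq] with ω hp1 heTre
    simp only [Pi.sub_apply, hp1, hpdef]
    rw [heTre]
  have hK0 : P[(fun ω => (1 - W ω) * Y0 ω)|sigmaAlg X]
      =ᵐ[P] fun ω => (1 - p ω) * μ0 (X ω) := by
    have h1 : (fun ω => (W ⁻¹' {0}).indicator (fun _ => (1:ℝ)) ω * Y0 ω)
        = fun ω => (1 - W ω) * Y0 ω := by
      funext ω; rw [congrFun hW0ind ω]
    have h2 : P[(W ⁻¹' {0}).indicator (fun _ => (1:ℝ))|sigmaAlg X]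
        = P[(fun ω => 1 - W ω)|sigmaAlg X] := by
      rw [hW0ind]
    rw [← h1]
    refine hK0'.trans ?_
    rw [h2]
    filter_upwards [hcsub, hμ0c] with ω hc hm0
    rw [hc, hm0]
  -- the coefficient functions
  set g : Ω → ℝ := fun ω => p ω ^ ν1 * (1 - p ω) ^ ν2 with hgdef
  have hg_m' : Measurable[sigmaAlg X] g :=
    (hpm'.pow_const ν1).mul ((measurable_const.sub hpm').pow_const ν2)
  have hg_m : Measurable g :=
    (hpm.pow_const ν1).mul ((measurable_const.sub hpm).pow_const ν2)
  have habsg : ∀ ω, |g ω| ≤ 1 := by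
    intro ω
    have h1 : (0:ℝ) ≤ p ω ^ ν1 := Real.rpow_nonneg (heTr0 _) _
    have h2 : p ω ^ ν1 ≤ 1 := Real.rpow_le_one (heTr0 _) (heTr1 _) hν1
    have h3 : (0:ℝ) ≤ (1 - p ω) ^ ν2 := Real.rpow_nonneg (by linarith [heTr1 (X ω)]) _
    have h4 : (1 - p ω) ^ ν2 ≤ 1 :=
      Real.rpow_le_one (by linarith [heTr1 (X ω)]) (by linarith [heTr0 (X ω)]) hν2
    rw [abs_of_nonneg (mul_nonneg h1 h3)]
    nlinarith
  have habsp2 : ∀ ω, |p ω ^ 2| ≤ 1 := by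
    intro ω
    rw [abs_pow]
    nlinarith [abs_nonneg (p ω), habsp ω]
  set c1 : Ω → ℝ := fun ω => g ω * ((θ2 * p ω + θ4 * p ω ^ 2) * (μ1 (X ω) - μ0 (X ω)))
    with hc1def
  set c2 : Ω → ℝ := fun ω => g ω * ((θ1 + θ3 * p ω) * (μ1 (X ω) - μ0 (X ω))) with hc2def
  set c3 : Ω → ℝ := fun ω => -(g ω * (1 - p ω)) with hc3def
  set c4 : Ω → ℝ := fun ω => g ω * p ω with hc4def
  have habsτ : ∀ ω, |μ1 (X ω) - μ0 (X ω)| ≤ |Cμ| + |Cμ| := by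
    intro ω
    refine (abs_sub _ _).trans (add_le_add ?_ ?_)
    · exact (hμbdd (X ω)).2.trans (le_abs_self _)
    · exact (hμbdd (X ω)).1.trans (le_abs_self _)
  have habsc1 : ∀ ω, |c1 ω| ≤ 1 * ((|θ2| * 1 + |θ4| * 1) * (|Cμ| + |Cμ|)) := by
    intro ω
    exact abs_mul_le' (habsg ω) (abs_mul_le'
      ((abs_add_le _ _).trans (add_le_add (abs_mul_le' le_rfl (habsp ω))
        (abs_mul_le' le_rfl (habsp2 ω)))) (habsτ ω))
  have habsc2 : ∀ ω, |c2 ω| ≤ 1 * ((|θ1| + |θ3| * 1) * (|Cμ| + |Cμ|)) := by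
    intro ω
    exact abs_mul_le' (habsg ω) (abs_mul_le'
      ((abs_add_le _ _).trans (add_le_add le_rfl (abs_mul_le' le_rfl (habsp ω)))) (habsτ ω))
  have habsc3 : ∀ ω, |c3 ω| ≤ 1 * 1 := by
    intro ω
    rw [hc3def]
    simp only [abs_neg]
    refine abs_mul_le' (habsg ω) ?_
    rw [abs_le]
    constructor <;> [linarith [heTr1 (X ω)]; linarith [heTr0 (X ω)]]
  have habsc4 : ∀ ω, |c4 ω| ≤ 1 * 1 := fun ω => abs_mul_le' (habsg ω) (habsp ω)
  have hc1m' : Measurable[sigmaAlg X] c1 :=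
    hg_m'.mul (((measurable_const.mul hpm').add
      (measurable_const.mul (hpm'.pow_const 2))).mul
      ((hμ1m.comp hXm').sub (hμ0m.comp hXm')))
  have hc2m' : Measurable[sigmaAlg X] c2 :=
    hg_m'.mul ((measurable_const.add (measurable_const.mul hpm')).mul
      ((hμ1m.comp hXm').sub (hμ0m.comp hXm')))
  have hc3m' : Measurable[sigmaAlg X] c3 := (hg_m'.mul (measurable_const.sub hpm')).neg
  have hc4m' : Measurable[sigmaAlg X] c4 := hg_m'.mul hpm'
  have hc1m : Measurable c1 := hc1m'.mono hm' le_rfl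
  have hc2m : Measurable c2 := hc2m'.mono hm' le_rfl
  have hc3m : Measurable c3 := hc3m'.mono hm' le_rfl
  have hc4m : Measurable c4 := hc4m'.mono hm' le_rfl
  have hξf_m : Measurable (fun ω => ξ (X ω, W ω)) := hξm.comp (hX.prodMk hWm)
  -- integrability of the five pieces
  have hint_ξ : Integrable (fun ω => ξ (X ω, W ω)) P :=
    integrable_of_bdd hξf_m.aestronglyMeasurable (ae_of_all _ fun ω => hξbdd _)
  have hint_1 : Integrable c1 P :=
    integrable_of_bdd hc1m.aestronglyMeasurable (ae_of_all _ habsc1)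
  have hint_2 : Integrable (fun ω => c2 ω * W ω) P :=
    integrable_of_bdd (hc2m.mul hWm).aestronglyMeasurable
      (ae_of_all _ fun ω => abs_mul_le' (habsc2 ω) (habsW ω))
  have hint_3 : Integrable (fun ω => c3 ω * (W ω * Y1 ω)) P :=
    integrable_of_bdd (hc3m.mul (hWm.mul hY1m)).aestronglyMeasurable
      (ae_of_all _ fun ω => abs_mul_le' (habsc3 ω) (habsf1 ω))
  have hint_4 : Integrable (fun ω => c4 ω * ((1 - W ω) * Y0 ω)) P :=
    integrable_of_bdd (hc4m.mul ((measurable_const.sub hWm).mul hY0m)).aestronglyMeasurable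
      (ae_of_all _ fun ω => abs_mul_le' (habsc4 ω) (habsf0 ω))
  -- pull-out steps
  have hstep2 : P[(fun ω => c2 ω * W ω)|sigmaAlg X] =ᵐ[P] fun ω => c2 ω * p ω := by
    have h := condExp_stronglyMeasurable_mul_of_bound hX.comap_le
      hc2m'.stronglyMeasurable hWint (1 * ((|θ1| + |θ3| * 1) * (|Cμ| + |Cμ|)))
      (ae_of_all _ fun ω => by rw [Real.norm_eq_abs]; exact habsc2 ω)
    refine EventuallyEq.trans h ?_
    filter_upwards [hprop, haeq] with ω h1 h2
    simp only [Pi.mul_apply]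
    rw [h1, hpdef]
    simp only
    rw [h2]
  have hstep3 : P[(fun ω => c3 ω * (W ω * Y1 ω))|sigmaAlg X]
      =ᵐ[P] fun ω => c3 ω * (p ω * μ1 (X ω)) := by
    have h := condExp_stronglyMeasurable_mul_of_bound hX.comap_le
      hc3m'.stronglyMeasurable hf1int (1 * 1)
      (ae_of_all _ fun ω => by rw [Real.norm_eq_abs]; exact habsc3 ω)
    refine EventuallyEq.trans h ?_
    filter_upwards [hK1] with ω h1
    simp only [Pi.mul_apply]
    rw [h1]
  have hstep4 : P[(fun ω => c4 ω * ((1 - W ω) * Y0 ω))|sigmaAlg X]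
      =ᵐ[P] fun ω => c4 ω * ((1 - p ω) * μ0 (X ω)) := by
    have h := condExp_stronglyMeasurable_mul_of_bound hX.comap_le
      hc4m'.stronglyMeasurable hf0int (1 * 1)
      (ae_of_all _ fun ω => by rw [Real.norm_eq_abs]; exact habsc4 ω)
    refine EventuallyEq.trans h ?_
    filter_upwards [hK0] with ω h1
    simp only [Pi.mul_apply]
    rw [h1]
  have hstep1 : P[c1|sigmaAlg X] = c1 :=
    condExp_of_stronglyMeasurable hm' hc1m'.stronglyMeasurable hint_1
  -- decomposition
  set Φ : Ω → ℝ := fun ω => ξ (X ω, W ω) + (c1 ω + (c2 ω * W ω +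
    (c3 ω * (W ω * Y1 ω) + c4 ω * ((1 - W ω) * Y0 ω)))) with hΦdef
  have hΨΦ : (fun ω => e (X ω) ^ ν1 * (1 - e (X ω)) ^ ν2 *
      ((θ1 * W ω + θ2 * e (X ω) + θ3 * W ω * e (X ω) + θ4 * e (X ω) ^ 2) *
        (μ1 (X ω) - μ0 (X ω)) - (W ω - e (X ω)) * Y ω) + ξ (X ω, W ω)) =ᵐ[P] Φ := by
    filter_upwards [haeq] with ω h
    simp only [hΦdef, hc1def, hc2def, hc3def, hc4def, hgdef, hpdef]
    rw [← h, hSUTVA ω]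
    rcases hWbin ω with hw | hw <;> rw [hw] <;> ring
  have hadd : P[Φ|sigmaAlg X] =ᵐ[P]
      P[(fun ω => ξ (X ω, W ω))|sigmaAlg X] + (P[c1|sigmaAlg X] +
        (P[(fun ω => c2 ω * W ω)|sigmaAlg X] +
          (P[(fun ω => c3 ω * (W ω * Y1 ω))|sigmaAlg X] +
            P[(fun ω => c4 ω * ((1 - W ω) * Y0 ω))|sigmaAlg X]))) := by
    have h34 := condExp_add (μ := P) (m := sigmaAlg X) hint_3 hint_4
    have h234 := condExp_add (μ := P) (m := sigmaAlg X) hint_2 (hint_3.add hint_4)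
    have h1234 := condExp_add (μ := P) (m := sigmaAlg X) hint_1
      (hint_2.add (hint_3.add hint_4))
    have hall := condExp_add (μ := P) (m := sigmaAlg X) hint_ξ
      (hint_1.add (hint_2.add (hint_3.add hint_4)))
    refine hall.trans ?_
    exact EventuallyEq.add EventuallyEq.rfl
      (h1234.trans (EventuallyEq.add EventuallyEq.rfl
        (h234.trans (EventuallyEq.add EventuallyEq.rfl h34))))
  have hpart1 : P[(fun ω => e (X ω) ^ ν1 * (1 - e (X ω)) ^ ν2 *
      ((θ1 * W ω + θ2 * e (X ω) + θ3 * W ω * e (X ω) + θ4 * e (X ω) ^ 2) *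
        (μ1 (X ω) - μ0 (X ω)) - (W ω - e (X ω)) * Y ω) + ξ (X ω, W ω))|sigmaAlg X]
      =ᵐ[P] 0 := by
    refine (condExp_congr_ae hΨΦ).trans (hadd.trans ?_)
    filter_upwards [hξ0, hstep2, hstep3, hstep4] with ω h0 h2 h3 h4
    simp only [Pi.add_apply, Pi.zero_apply]
    rw [h0, h2, h3, h4, congrFun hstep1 ω]
    simp only [Pi.zero_apply, hc1def, hc2def, hc3def, hc4def]
    have hth2 : θ2 = 1 - θ1 := by linarith
    have hth4 : θ4 = -1 - θ3 := by linarith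
    rw [hth2, hth4]
    ring
  refine ⟨hpart1, ?_⟩
  -- Part 2 : boundedness of the conditional second moment
  set K : ℝ := (|θ1| + |θ2| + |θ3| + |θ4|) * (|Cμ| + |Cμ|) + 1 * |CY| + |Cξ| with hKdef
  set Ψ : Ω → ℝ := fun ω => e (X ω) ^ ν1 * (1 - e (X ω)) ^ ν2 *
      ((θ1 * W ω + θ2 * e (X ω) + θ3 * W ω * e (X ω) + θ4 * e (X ω) ^ 2) *
        (μ1 (X ω) - μ0 (X ω)) - (W ω - e (X ω)) * Y ω) + ξ (X ω, W ω) with hΨdef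
  have hΨm : Measurable Ψ := by
    have he' : Measurable (fun ω => e (X ω)) := hem.comp hX
    exact (((he'.pow_const ν1).mul ((measurable_const.sub he').pow_const ν2)).mul
      ((((((measurable_const.mul hWm).add (measurable_const.mul he')).add
        ((measurable_const.mul hWm).mul he')).add
        (measurable_const.mul (he'.pow_const 2))).mul
        ((hμ1m.comp hX).sub (hμ0m.comp hX))).sub
        ((hWm.sub he').mul hYm))).add hξf_m
  have hΨbdd : ∀ᵐ ω ∂P, |Ψ ω| ≤ K := by
    filter_upwards [hoverlap] with ω h
    have ha0 : (0:ℝ) ≤ e (X ω) := h.1.le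
    have ha1 : e (X ω) ≤ 1 := h.2.le
    have hr1 : |e (X ω) ^ ν1| ≤ 1 := by
      rw [abs_of_nonneg (Real.rpow_nonneg ha0 _)]
      exact Real.rpow_le_one ha0 ha1 hν1
    have hr2 : |(1 - e (X ω)) ^ ν2| ≤ 1 := by
      rw [abs_of_nonneg (Real.rpow_nonneg (by linarith) _)]
      exact Real.rpow_le_one (by linarith) (by linarith) hν2
    have hae1 : |e (X ω)| ≤ 1 := abs_le.mpr ⟨by linarith, ha1⟩
    have hae2 : |e (X ω) ^ 2| ≤ 1 := by
      rw [abs_pow]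
      nlinarith [abs_nonneg (e (X ω)), hae1]
    have hQ : |θ1 * W ω + θ2 * e (X ω) + θ3 * W ω * e (X ω) + θ4 * e (X ω) ^ 2|
        ≤ |θ1| + |θ2| + |θ3| + |θ4| := by
      have t1 : |θ1 * W ω| ≤ |θ1| := by
        simpa using abs_mul_le' (le_refl |θ1|) (habsW ω)
      have t2 : |θ2 * e (X ω)| ≤ |θ2| := by
        simpa using abs_mul_le' (le_refl |θ2|) hae1
      have t3 : |θ3 * W ω * e (X ω)| ≤ |θ3| := by
        have := abs_mul_le' (abs_mul_le' (le_refl |θ3|) (habsW ω)) hae1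
        simpa using this
      have t4 : |θ4 * e (X ω) ^ 2| ≤ |θ4| := by
        simpa using abs_mul_le' (le_refl |θ4|) hae2
      have u1 := abs_add_le (θ1 * W ω + θ2 * e (X ω) + θ3 * W ω * e (X ω)) (θ4 * e (X ω) ^ 2)
      have u2 := abs_add_le (θ1 * W ω + θ2 * e (X ω)) (θ3 * W ω * e (X ω))
      have u3 := abs_add_le (θ1 * W ω) (θ2 * e (X ω))
      linarith
    have hWe : |W ω - e (X ω)| ≤ 1 := by
      rcases hWbin ω with hw | hw <;> rw [hw] <;> rw [abs_le] <;>
        constructor <;> linarith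
    have hBR : |(θ1 * W ω + θ2 * e (X ω) + θ3 * W ω * e (X ω) + θ4 * e (X ω) ^ 2) *
        (μ1 (X ω) - μ0 (X ω)) - (W ω - e (X ω)) * Y ω|
        ≤ (|θ1| + |θ2| + |θ3| + |θ4|) * (|Cμ| + |Cμ|) + 1 * |CY| := by
      refine (abs_sub _ _).trans (add_le_add ?_ ?_)
      · exact abs_mul_le' hQ (habsτ ω)
      · exact abs_mul_le' hWe (habsY ω)
    calc |Ψ ω| ≤ |e (X ω) ^ ν1 * (1 - e (X ω)) ^ ν2 *
          ((θ1 * W ω + θ2 * e (X ω) + θ3 * W ω * e (X ω) + θ4 * e (X ω) ^ 2) *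
            (μ1 (X ω) - μ0 (X ω)) - (W ω - e (X ω)) * Y ω)| + |ξ (X ω, W ω)| := abs_add_le _ _
      _ ≤ 1 * 1 * ((|θ1| + |θ2| + |θ3| + |θ4|) * (|Cμ| + |Cμ|) + 1 * |CY|) + |Cξ| := by
          gcongr ?_ + ?_
          · exact abs_mul_le' (abs_mul_le' hr1 hr2) hBR
          · exact (hξbdd _).trans (le_abs_self _)
      _ = K := by rw [hKdef]; ring
  have hK0' : 0 ≤ K := le_trans (abs_nonneg _) (hΨbdd.exists.choose_spec)
  have hΨ2int : Integrable (fun ω => Ψ ω ^ 2) P := by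
    refine integrable_of_bdd (C := K ^ 2) (hΨm.pow_const 2).aestronglyMeasurable ?_
    filter_upwards [hΨbdd] with ω h
    rw [abs_pow]
    nlinarith [abs_nonneg (Ψ ω)]
  have hmono : P[(fun ω => Ψ ω ^ 2)|sigmaAlg X] ≤ᵐ[P] P[(fun _ => K ^ 2)|sigmaAlg X] := by
    refine condExp_mono hΨ2int (integrable_const _) ?_
    filter_upwards [hΨbdd] with ω h
    nlinarith [abs_nonneg (Ψ ω), sq_abs (Ψ ω)]
  refine ⟨K ^ 2, ?_⟩
  filter_upwards [hmono] with ω h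
  calc (P[(fun ω' => Ψ ω' ^ 2)|sigmaAlg X]) ω ≤ (P[(fun _ => K ^ 2)|sigmaAlg X]) ω := h
    _ = K ^ 2 := by rw [condExp_const hm']
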